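/- For every integer n ≥ 1, the grid vertex 2^{-n}(1,1,1) is the unique panchromatic grid vertex of the basic coloring f₀ⁿ: it is adjacent to cubelets of all four colors 0, 1, 2, 3 under f₀ⁿ, and no other grid vertex has this property. -/
import Mathlib


/-- A cubelet index i is adjacent to a grid coordinate a (both along one axis)
iff the grid coordinate is one of the two faces of the cubelet: a = i or a = i + 1.
(The grid vertex 2^{-n}(a,b,c) is a corner of cubelet K_{ijk} iff this holds on each axis.) -/
def AdjIdx (a i : ℕ) : Prop := a = i ∨ a = i + 1

/-- A cubelet K_{ijk} is exterior if some index equals 0 or 2^n − 1. -/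
def ExteriorCubelet (n : ℕ) (i j k : Fin (2 ^ n)) : Prop :=
  i.val = 0 ∨ j.val = 0 ∨ k.val = 0 ∨
    i.val = 2 ^ n - 1 ∨ j.val = 2 ^ n - 1 ∨ k.val = 2 ^ n - 1

/-- The bmf boundary conditions on a coloring f. -/
def BMFBoundary (n : ℕ) (f : Fin (2 ^ n) → Fin (2 ^ n) → Fin (2 ^ n) → Fin 4) : Prop :=
  ∀ i j k : Fin (2 ^ n),
    (i.val = 0 → f i j k = 1) ∧
    (j.val = 0 → 0 < i.val → f i j k = 2) ∧
    (k.val = 0 → 0 < i.val → 0 < j.val → f i j k = 3) ∧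
    (ExteriorCubelet n i j k → 0 < i.val → 0 < j.val → 0 < k.val → f i j k = 0)

/-- The grid vertex 2^{-n}(a,b,c) has a cubelet of color `col` adjacent to it. -/
def HasColorAt (n : ℕ) (f : Fin (2 ^ n) → Fin (2 ^ n) → Fin (2 ^ n) → Fin 4)
    (a b c : ℕ) (col : Fin 4) : Prop :=
  ∃ i j k : Fin (2 ^ n), AdjIdx a i.val ∧ AdjIdx b j.val ∧ AdjIdx c k.val ∧ f i j k = col
/-- The basic coloring f₀ⁿ: colors forced by the bmf boundary conditions, 0 elsewhere. -/
def basicColoring (n : ℕ) : Fin (2 ^ n) → Fin (2 ^ n) → Fin (2 ^ n) → Fin 4 :=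
  fun i j k =>
    if i.val = 0 then 1
    else if j.val = 0 then 2
    else if k.val = 0 then 3
    else 0

/-- A grid vertex 2^{-n}(a,b,c) is panchromatic under f if every one of the four colors
appears on some adjacent cubelet. -/
def Panchromatic (n : ℕ) (f : Fin (2 ^ n) → Fin (2 ^ n) → Fin (2 ^ n) → Fin 4)
    (a b c : ℕ) : Prop :=
  ∀ col : Fin 4, HasColorAt n f a b c col


lemma bc_eq_one {n : ℕ} {i j k : Fin (2 ^ n)} (h : basicColoring n i j k = 1) :
    i.val = 0 := by
  unfold basicColoring at h
  split_ifs at h with h1 h2 h3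
  · exact h1
  all_goals exact absurd h (by decide)

lemma bc_eq_two {n : ℕ} {i j k : Fin (2 ^ n)} (h : basicColoring n i j k = 2) :
    i.val ≠ 0 ∧ j.val = 0 := by
  unfold basicColoring at h
  split_ifs at h with h1 h2 h3
  · exact absurd h (by decide)
  · exact ⟨h1, h2⟩
  all_goals exact absurd h (by decide)

lemma bc_eq_three {n : ℕ} {i j k : Fin (2 ^ n)} (h : basicColoring n i j k = 3) :
    i.val ≠ 0 ∧ j.val ≠ 0 ∧ k.val = 0 := by
  unfold basicColoring at h
  split_ifs at h with h1 h2 h3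
  · exact absurd h (by decide)
  · exact absurd h (by decide)
  · exact ⟨h1, h2, h3⟩
  · exact absurd h (by decide)

lemma bc_eq_zero {n : ℕ} {i j k : Fin (2 ^ n)} (h : basicColoring n i j k = 0) :
    i.val ≠ 0 ∧ j.val ≠ 0 ∧ k.val ≠ 0 := by
  unfold basicColoring at h
  split_ifs at h with h1 h2 h3
  · exact absurd h (by decide)
  · exact absurd h (by decide)
  · exact absurd h (by decide)
  · exact ⟨h1, h2, h3⟩

/-- 2^{-n}(1,1,1) is the unique panchromatic grid vertex of the basic
coloring f₀ⁿ. -/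
theorem basic_unique_panchromatic (n : ℕ) (hn : 1 ≤ n) :
    Panchromatic n (basicColoring n) 1 1 1 ∧
    ∀ a b c : ℕ, a ≤ 2 ^ n → b ≤ 2 ^ n → c ≤ 2 ^ n →
      Panchromatic n (basicColoring n) a b c → a = 1 ∧ b = 1 ∧ c = 1 := by
  have h2 : 2 ≤ 2 ^ n := by
    calc 2 = 2 ^ 1 := rfl
    _ ≤ 2 ^ n := Nat.pow_le_pow_right (by norm_num) hn
  have h0 : (0 : ℕ) < 2 ^ n := by omega
  have h1 : (1 : ℕ) < 2 ^ n := by omega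
  constructor
  · intro col
    fin_cases col
    · exact ⟨⟨1, h1⟩, ⟨1, h1⟩, ⟨1, h1⟩, Or.inl rfl, Or.inl rfl, Or.inl rfl,
        by simp [basicColoring]⟩
    · exact ⟨⟨0, h0⟩, ⟨1, h1⟩, ⟨1, h1⟩, Or.inr rfl, Or.inl rfl, Or.inl rfl,
        by simp [basicColoring]⟩
    · exact ⟨⟨1, h1⟩, ⟨0, h0⟩, ⟨1, h1⟩, Or.inl rfl, Or.inr rfl, Or.inl rfl,
        by simp [basicColoring]⟩
    · exact ⟨⟨1, h1⟩, ⟨1, h1⟩, ⟨0, h0⟩, Or.inl rfl, Or.inl rfl, Or.inr rfl,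
        by simp [basicColoring]⟩
  · intro a b c ha hb hc hp
    obtain ⟨i1, j1, k1, hai1, hbj1, hck1, hf1⟩ := hp 1
    have e1 := bc_eq_one hf1
    obtain ⟨i2, j2, k2, hai2, hbj2, hck2, hf2⟩ := hp 2
    have e2 := bc_eq_two hf2
    obtain ⟨i3, j3, k3, hai3, hbj3, hck3, hf3⟩ := hp 3
    have e3 := bc_eq_three hf3
    obtain ⟨i0, j0, k0, hai0, hbj0, hck0, hf0⟩ := hp 0
    have e0 := bc_eq_zero hf0
    unfold AdjIdx at hai1 hbj1 hck1 hai2 hbj2 hck2 hai3 hbj3 hck3 hai0 hbj0 hck0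
    omega
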